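/- Let A be a unital algebra over ℂ, M a unital A-bimodule, and m, n positive integers with m ≠ n. Let δ : A → M be an (m,n)-Jordan derivable mapping at zero with δ(1) = 0, and let P be an idempotent in A. Then for every A ∈ A, (m+n)·δ(AP + PA) = 2m·δ(A)·P + 2n·P·δ(A). -/
import Mathlib


open MulOpposite

private lemma cancel_smul_c {M : Type*} [AddCommGroup M] [Module ℂ M]
    {r s : ℂ} {x : M} (hrs : r ≠ s) (h : r • x = s • x) : x = 0 := by
  have h3 : r - s ≠ 0 := sub_ne_zero.mpr hrs
  have h2 : (r - s) • x = 0 := by rw [sub_smul, h, sub_self]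
  have := congrArg (fun z => (r - s)⁻¹ • z) h2
  simpa [smul_smul, inv_mul_cancel₀ h3] using this


/-- `(m+n)·δ(AP+PA) = 2m·δ(A)·P + 2n·P·δ(A)` for every idempotent `P`. -/
theorem mn_jordan_derivable_at_zero_idempotent_identity
    {A M : Type*} [Ring A] [Algebra ℂ A]
    [AddCommGroup M] [Module ℂ M] [Module A M] [Module Aᵐᵒᵖ M]
    [SMulCommClass A Aᵐᵒᵖ M]
    (m n : ℕ) (hm : 0 < m) (hn : 0 < n) (hmn : m ≠ n)
    (δ : A → M) (hadd : ∀ a b : A, δ (a + b) = δ a + δ b)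
    (hδ1 : δ 1 = 0)
    (hzero : ∀ X Y : A, X * Y = 0 → Y * X = 0 →
      (m + n) • δ (X * Y + Y * X) =
        (2 * m) • (op Y • δ X) + (2 * m) • (op X • δ Y)
          + (2 * n) • (X • δ Y) + (2 * n) • (Y • δ X))
    (P : A) (hP : P * P = P) (a : A) :
    (m + n) • δ (a * P + P * a) = (2 * m) • (op P • δ a) + (2 * n) • (P • δ a) := by
  have hδ0 : δ 0 = 0 := by
    have h := hadd 0 0
    rw [add_zero] at h
    have h2 : δ 0 + 0 = δ 0 + δ 0 := by rw [add_zero]; exact h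
    exact (add_left_cancel h2).symm
  have hneg : ∀ x, δ (-x) = - δ x := by
    intro x
    have h := hadd x (-x)
    rw [add_neg_cancel, hδ0] at h
    exact eq_neg_of_add_eq_zero_right h.symm
  have hsub : ∀ x y, δ (x - y) = δ x - δ y := by
    intro x y
    rw [sub_eq_add_neg, hadd, hneg, ← sub_eq_add_neg]
  have hmn' : (m:ℂ) ≠ (n:ℂ) := fun h => hmn (Nat.cast_injective h)
  have h2mn : (2*(m:ℂ)) ≠ 2*(n:ℂ) := fun h => hmn' (mul_left_cancel₀ two_ne_zero h)
  have hmn0 : (2*(m:ℂ) + 2*(n:ℂ)) ≠ 0 := by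
    have : ((2*m+2*n : ℕ):ℂ) ≠ 0 := Nat.cast_ne_zero.mpr (by omega)
    push_cast at this; convert this using 2
  let f : M →+ M := AddMonoidHom.mk' (fun x => P • x) (fun x y => smul_add P x y)
  let g : M →+ M := AddMonoidHom.mk' (fun x => op P • x) (fun x y => smul_add (op P) x y)
  have hf : ∀ x : M, f x = P • x := fun _ => rfl
  have hg : ∀ x : M, g x = op P • x := fun _ => rfl
  have hLL : ∀ x : M, P • (P • x) = P • x := by
    intro x; rw [← mul_smul, hP]
  have hRR : ∀ x : M, op P • (op P • x) = op P • x := by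
    intro x; rw [← mul_smul, ← op_mul, hP]
  have hLR : ∀ x : M, P • (op P • x) = op P • (P • x) := fun x => smul_comm P (op P) x
  -- Step 1 : δ P = 0
  have hPQ : P * (1 - P) = 0 := by rw [mul_sub, mul_one, hP, sub_self]
  have hQP : (1 - P) * P = 0 := by rw [sub_mul, one_mul, hP, sub_self]
  have hδQ : δ (1 - P) = - δ P := by rw [hsub 1 P, hδ1, zero_sub]
  have hQQ : (1 - P) * (1 - P) = 1 - P := by
    rw [sub_mul, one_mul, mul_sub, mul_one, hP]; abel
  have h0 := hzero P (1 - P) hPQ hQP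
  rw [hPQ, hQP, add_zero, hδ0, smul_zero, hδQ] at h0
  simp only [op_sub, op_one, sub_smul, one_smul, smul_neg, smul_sub] at h0
  have hLRp : op P • (P • δ P) = 0 := by
    have h1 := congrArg g (congrArg f h0)
    simp only [map_add, map_sub, map_neg, map_zero, AddMonoidHom.map_nsmul] at h1
    simp only [hf, hg, hLR, hLL, hRR] at h1
    simp only [← Nat.cast_smul_eq_nsmul ℂ] at h1
    push_cast at h1
    generalize (op P • (P • δ P) : M) = w at h1
    refine cancel_smul_c (r := (2*(m:ℂ) + 2*(n:ℂ))) (s := 0) hmn0 ?_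
    linear_combination (norm := module) h1
  have hLp : P • δ P = 0 := by
    have h1 := congrArg f h0
    simp only [map_add, map_sub, map_neg, map_zero, AddMonoidHom.map_nsmul] at h1
    simp only [hf, hLR, hLL] at h1
    rw [hLRp] at h1
    simp only [← Nat.cast_smul_eq_nsmul ℂ] at h1
    push_cast at h1
    generalize (P • δ P : M) = w at h1
    refine cancel_smul_c (r := (2*(m:ℂ))) (s := 2*(n:ℂ)) h2mn ?_
    linear_combination (norm := module) -h1
  have hRp : op P • δ P = 0 := by
    have h1 := congrArg g h0
    simp only [map_add, map_sub, map_neg, map_zero, AddMonoidHom.map_nsmul] at h1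
    simp only [hg, hLR, hRR] at h1
    rw [hLRp] at h1
    simp only [← Nat.cast_smul_eq_nsmul ℂ] at h1
    push_cast at h1
    generalize (op P • δ P : M) = w at h1
    refine cancel_smul_c (r := (2*(m:ℂ))) (s := 2*(n:ℂ)) h2mn ?_
    linear_combination (norm := module) h1
  have hp : δ P = 0 := by
    rw [hLp, hRp] at h0
    simp only [← Nat.cast_smul_eq_nsmul ℂ] at h0
    push_cast at h0
    generalize (δ P : M) = w at h0
    refine cancel_smul_c (r := (2*(m:ℂ) + 2*(n:ℂ))) (s := 0) hmn0 ?_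
    linear_combination (norm := module) -h0
  -- square-zero lemma
  have hSq : ∀ x : A, x * x = 0 →
      (0:M) = (2*m) • (op x • δ x) + (2*m) • (op x • δ x)
        + (2*n) • (x • δ x) + (2*n) • (x • δ x) := by
    intro x hxx
    have h1 := hzero x x hxx hxx
    rwa [hxx, add_zero, hδ0, smul_zero] at h1
  -- diagonal 11 component
  have Hdiag : ∀ x : A, P * x = x → x * P = x →
      (2*(m:ℂ)) • (op P • δ x) + (2*(n:ℂ)) • (P • δ x) = (2*(m:ℂ)+2*(n:ℂ)) • δ x := by
    intro x hpx hxp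
    have hxQ : x * (1 - P) = 0 := by rw [mul_sub, mul_one, hxp, sub_self]
    have hQx : (1 - P) * x = 0 := by rw [sub_mul, one_mul, hpx, sub_self]
    have h1 := hzero x (1 - P) hxQ hQx
    rw [hxQ, hQx, add_zero, hδ0, smul_zero, hδQ, hp] at h1
    simp only [neg_zero, smul_zero, op_sub, op_one, sub_smul, one_smul, smul_sub,
      add_zero, zero_add] at h1
    simp only [← Nat.cast_smul_eq_nsmul ℂ] at h1
    push_cast at h1
    generalize (op P • δ x : M) = v at h1 ⊢
    generalize (P • δ x : M) = w at h1 ⊢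
    generalize (δ x : M) = u at h1 ⊢
    linear_combination (norm := module) h1
  -- off-diagonal 12 component
  have Hoff1 : ∀ x : A, P * x = x → x * P = 0 →
      (2*(m:ℂ)) • (op P • δ x) + (2*(n:ℂ)) • (P • δ x) = ((m:ℂ)+(n:ℂ)) • δ x := by
    intro x hpx hxp
    have hxx : x * x = 0 := by
      calc x * x = x * (P * x) := by rw [hpx]
      _ = (x * P) * x := by rw [mul_assoc]
      _ = 0 := by rw [hxp, zero_mul]
    have hS := hSq x hxx
    have hEE : (P + x) * (P + x) = P + x := by
      rw [mul_add, add_mul, add_mul, hP, hpx, hxp, hxx]; abel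
    have hEF : (P + x) * (1 - (P + x)) = 0 := by rw [mul_sub, mul_one, hEE, sub_self]
    have hFE : (1 - (P + x)) * (P + x) = 0 := by rw [sub_mul, one_mul, hEE, sub_self]
    have hδE : δ (P + x) = δ x := by rw [hadd, hp, zero_add]
    have hδF : δ (1 - (P + x)) = - δ x := by rw [hsub, hδ1, hδE, zero_sub]
    have h1 := hzero (P + x) (1 - (P + x)) hEF hFE
    rw [hEF, hFE, add_zero, hδ0, smul_zero, hδE, hδF] at h1
    simp only [op_sub, op_add, op_one, sub_smul, add_smul, one_smul, smul_neg,
      smul_sub, smul_add] at h1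
    simp only [← Nat.cast_smul_eq_nsmul ℂ] at h1 hS
    push_cast at h1 hS
    generalize (op P • δ x : M) = v at h1 hS ⊢
    generalize (P • δ x : M) = w at h1 hS ⊢
    generalize (op x • δ x : M) = vx at h1 hS ⊢
    generalize (x • δ x : M) = wx at h1 hS ⊢
    generalize (δ x : M) = u at h1 hS ⊢
    linear_combination (norm := module) ((1/2:ℂ)) • h1 + (1/2:ℂ) • hS
  -- off-diagonal 21 component
  have Hoff2 : ∀ x : A, P * x = 0 → x * P = x →
      (2*(m:ℂ)) • (op P • δ x) + (2*(n:ℂ)) • (P • δ x) = ((m:ℂ)+(n:ℂ)) • δ x := by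
    intro x hpx hxp
    have hxx : x * x = 0 := by
      calc x * x = (x * P) * x := by rw [hxp]
      _ = x * (P * x) := by rw [mul_assoc]
      _ = 0 := by rw [hpx, mul_zero]
    have hS := hSq x hxx
    have hEE : ((1 - P) + x) * ((1 - P) + x) = (1 - P) + x := by
      rw [mul_add, add_mul, add_mul, hQQ]
      rw [sub_mul, one_mul, hpx, sub_zero, mul_sub, mul_one, hxp, sub_self, hxx]
      abel
    have hEF : ((1 - P) + x) * (1 - ((1 - P) + x)) = 0 := by
      rw [mul_sub, mul_one, hEE, sub_self]
    have hFE : (1 - ((1 - P) + x)) * ((1 - P) + x) = 0 := by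
      rw [sub_mul, one_mul, hEE, sub_self]
    have hδE : δ ((1 - P) + x) = δ x := by rw [hadd, hδQ, hp, neg_zero, zero_add]
    have hδF : δ (1 - ((1 - P) + x)) = - δ x := by rw [hsub, hδ1, hδE, zero_sub]
    have h1 := hzero ((1 - P) + x) (1 - ((1 - P) + x)) hEF hFE
    rw [hEF, hFE, add_zero, hδ0, smul_zero, hδE, hδF] at h1
    simp only [op_sub, op_add, op_one, sub_smul, add_smul, one_smul, smul_neg,
      smul_sub, smul_add] at h1
    simp only [← Nat.cast_smul_eq_nsmul ℂ] at h1 hS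
    push_cast at h1 hS
    generalize (op P • δ x : M) = v at h1 hS ⊢
    generalize (P • δ x : M) = w at h1 hS ⊢
    generalize (op x • δ x : M) = vx at h1 hS ⊢
    generalize (x • δ x : M) = wx at h1 hS ⊢
    generalize (δ x : M) = u at h1 hS ⊢
    linear_combination (norm := module) (-(1/2:ℂ)) • h1 - (1/2:ℂ) • hS
  -- diagonal 22 component
  have H22 : ∀ x : A, P * x = 0 → x * P = 0 →
      (2*(m:ℂ)) • (op P • δ x) + (2*(n:ℂ)) • (P • δ x) = 0 := by
    intro x hpx hxp
    have h1 := hzero x P hxp hpx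
    rw [hxp, hpx, add_zero, hδ0, smul_zero, hp] at h1
    simp only [smul_zero, add_zero, zero_add] at h1
    simp only [← Nat.cast_smul_eq_nsmul ℂ] at h1
    push_cast at h1
    generalize (op P • δ x : M) = v at h1 ⊢
    generalize (P • δ x : M) = w at h1 ⊢
    linear_combination (norm := module) -h1
  -- Peirce decomposition of a
  have hP2 : ∀ y : A, P * (P * y) = P * y := fun y => by rw [← mul_assoc, hP]
  have K11 := Hdiag (P * (a * P))
    (by simp only [mul_assoc, hP, hP2]) (by simp only [mul_assoc, hP, hP2])
  have K12 := Hoff1 (P * a - P * (a * P))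
    (by simp only [mul_sub, hP2]) (by simp only [sub_mul, mul_assoc, hP, hP2, sub_self])
  have K21 := Hoff2 (a * P - P * (a * P))
    (by simp only [mul_sub, mul_assoc, hP, hP2, sub_self]) (by simp only [sub_mul, mul_assoc, hP, hP2])
  have K22 := H22 (a - P * a - a * P + P * (a * P))
    (by simp only [mul_add, mul_sub, mul_assoc, hP, hP2]; abel)
    (by simp only [add_mul, sub_mul, mul_assoc, hP, hP2]; abel)
  -- additivity decompositions
  have hδaP : δ (a * P) = δ (P * (a * P)) + δ (a * P - P * (a * P)) := by
    conv_lhs => rw [show a * P = P * (a * P) + (a * P - P * (a * P)) by abel]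
    rw [hadd]
  have hδPa : δ (P * a) = δ (P * (a * P)) + δ (P * a - P * (a * P)) := by
    conv_lhs => rw [show P * a = P * (a * P) + (P * a - P * (a * P)) by abel]
    rw [hadd]
  have hδa : δ a = δ (P * (a * P)) + (δ (P * a - P * (a * P)) +
      (δ (a * P - P * (a * P)) + δ (a - P * a - a * P + P * (a * P)))) := by
    conv_lhs => rw [show a = P * (a * P) + ((P * a - P * (a * P)) +
      ((a * P - P * (a * P)) + (a - P * a - a * P + P * (a * P)))) by abel]
    rw [hadd, hadd, hadd]
  rw [hadd (a * P) (P * a), hδaP, hδPa, hδa]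
  simp only [smul_add]
  simp only [← Nat.cast_smul_eq_nsmul ℂ]
  push_cast
  generalize (op P • δ (P * (a * P)) : M) = v11 at K11 ⊢
  generalize (P • δ (P * (a * P)) : M) = w11 at K11 ⊢
  generalize (δ (P * (a * P)) : M) = u11 at K11 ⊢
  generalize (op P • δ (P * a - P * (a * P)) : M) = v12 at K12 ⊢
  generalize (P • δ (P * a - P * (a * P)) : M) = w12 at K12 ⊢
  generalize (δ (P * a - P * (a * P)) : M) = u12 at K12 ⊢
  generalize (op P • δ (a * P - P * (a * P)) : M) = v21 at K21 ⊢
  generalize (P • δ (a * P - P * (a * P)) : M) = w21 at K21 ⊢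
  generalize (δ (a * P - P * (a * P)) : M) = u21 at K21 ⊢
  generalize (op P • δ (a - P * a - a * P + P * (a * P)) : M) = v22 at K22 ⊢
  generalize (P • δ (a - P * a - a * P + P * (a * P)) : M) = w22 at K22 ⊢
  generalize (δ (a - P * a - a * P + P * (a * P)) : M) = u22 at K22 ⊢
  linear_combination (norm := module) -K11 - K12 - K21 - K22
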